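/- Let q ≥ 3 and let 1 ≤ d_2 ≤ d_1 be integers with d_1 + d_2 ≤ s. Let H be the hypergraph on {1,…,s} whose edges are all subsets e ⊆ {1,…,s} with d_2 ≤ |e| ≤ d_1. Then the minimum distance of the edge code of H is δ(C_H) = (q−2)^{d_1} (q−1)^{s−d_1}. -/

import Mathlib

open MvPolynomial

/-- The affine torus `T = (K*)^s`: points of `K^s` with all coordinates nonzero. -/
abbrev Torus (s : ℕ) (K : Type) [Zero K] := {P : Fin s → K // ∀ i, P i ≠ 0}

/-- The evaluation map `f ↦ (f(P))_{P ∈ T}` as a linear map. -/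
noncomputable def evalTorus (s : ℕ) (K : Type) [Field K] :
    MvPolynomial (Fin s) K →ₗ[K] (Torus s K → K) :=
  LinearMap.pi fun P => (aeval (P.1 : Fin s → K)).toLinearMap

/-- The edge code of a hypergraph with edge set `E` on vertex set `{1,…,s}`:
the image under evaluation of the span of the squarefree monomials `∏_{j ∈ e} t_j`. -/
noncomputable def edgeCode (s : ℕ) (K : Type) [Field K] (E : Set (Finset (Fin s))) :
    Submodule K (Torus s K → K) :=
  (Submodule.span K ((fun e : Finset (Fin s) => ∏ j ∈ e, X j) '' E)).map (evalTorus s K)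

/-- Hamming weight of a word indexed by the torus. -/
noncomputable def wt {s : ℕ} {K : Type} [Field K] (c : Torus s K → K) : ℕ :=
  {P | c P ≠ 0}.ncard

/-- Minimum distance of a linear code: the least Hamming weight of a nonzero codeword. -/
noncomputable def minDist {s : ℕ} {K : Type} [Field K] (C : Submodule K (Torus s K → K)) : ℕ :=
  sInf {w : ℕ | ∃ c ∈ C, c ≠ 0 ∧ wt c = w}

section Helpers

open Finset
open scoped Classical

set_option linter.unusedVariables false
set_option linter.unusedSectionVars false

variable {K : Type} [Field K] [Fintype K]

noncomputable def cntNZ {s : ℕ} (K : Type) [Field K] [Fintype K]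
    (f : MvPolynomial (Fin s) K) : ℕ :=
  (Finset.univ.filter fun P : Fin s → K => (∀ i, P i ≠ 0) ∧ eval P f ≠ 0).card

variable {K : Type} [Field K] [Fintype K]

lemma sf_degree_le {s : ℕ} (m : Fin s →₀ ℕ) (hm : ∀ i, m i ≤ 1) :
    (m.sum fun _ e => e) ≤ s := by
  rw [Finsupp.sum_fintype _ _ (fun _ => rfl)]
  calc (∑ i, m i) ≤ ∑ _i : Fin s, 1 := Finset.sum_le_sum fun i _ => hm i
  _ = s := by simp

lemma cons_degree {s : ℕ} (m : Fin s →₀ ℕ) (i : ℕ) :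
    ((m.cons i).sum fun _ e => e) = i + (m.sum fun _ e => e) := by
  rw [Finsupp.sum_fintype _ _ (fun _ => rfl), Finsupp.sum_fintype _ _ (fun _ => rfl)]
  rw [Fin.sum_univ_succ]
  simp [Finsupp.cons_zero, Finsupp.cons_succ]

def consEquivF (s : ℕ) (K : Type) : ((Fin s → K) × K) ≃ (Fin (s+1) → K) :=
  ⟨fun x => Fin.cons x.2 x.1, fun P => (Fin.tail P, P 0),
    fun x => by simp, fun P => by simp [Fin.cons_self_tail]⟩

@[simp] lemma consEquivF_apply (s : ℕ) (K : Type) (x : (Fin s → K) × K) :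
    consEquivF s K x = Fin.cons x.2 x.1 := rfl

lemma lower_core (q : ℕ) (hq : 3 ≤ q) (hK : Fintype.card K = q) :
    ∀ (s : ℕ), ∀ d ≤ s, ∀ (f : MvPolynomial (Fin s) K), f ≠ 0 →
      (∀ m ∈ f.support, ∀ i, m i ≤ 1) → f.totalDegree ≤ d →
      (q - 2) ^ d * (q - 1) ^ (s - d) ≤ cntNZ K f := by
  intro s
  induction s with
  | zero =>
    intro d hd f hf0 _ _
    interval_cases d
    simp only [pow_zero, one_mul, Nat.zero_sub]
    obtain ⟨a, rfl⟩ := C_surjective (Fin 0) f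
    have ha : a ≠ 0 := fun h => hf0 (by simp [h])
    refine Finset.card_pos.mpr ⟨(fun _ => 1), Finset.mem_filter.mpr
      ⟨Finset.mem_univ _, fun i => i.elim0, by simp [ha]⟩⟩
  | succ s ih =>
    intro d hds f hf0 hsf hdeg
    set F := finSuccEquiv K s f with hF
    set g := F.coeff 1 with hg'
    set h := F.coeff 0 with hh'
    have hcoeff : ∀ i ≥ 2, F.coeff i = 0 := by
      intro i hi
      apply MvPolynomial.ext
      intro m
      rw [hF, finSuccEquiv_coeff_coeff]
      simp only [coeff_zero]
      by_contra hc
      have hmem : m.cons i ∈ f.support := by rwa [mem_support_iff]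
      have := hsf _ hmem 0
      rw [Finsupp.cons_zero] at this
      omega
    have hFeq : F = Polynomial.C h + Polynomial.C g * Polynomial.X := by
      apply Polynomial.ext
      intro n
      match n with
      | 0 => simp [hh']
      | 1 => simp [hg']
      | (n+2) =>
        rw [hcoeff (n+2) (by omega)]
        simp [Polynomial.coeff_X, Polynomial.coeff_C]
    have heval : ∀ (a : K) (Q : Fin s → K),
        eval (Fin.cons a Q : Fin (s+1) → K) f = eval Q h + eval Q g * a := by
      intro a Q
      rw [eval_eq_eval_mv_eval', ← hF, hFeq]
      simp [Polynomial.eval_map, Polynomial.eval₂_add, Polynomial.eval₂_mul]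
    have hsplit : ∀ (a : K) (Q : Fin s → K),
        ((∀ i, (Fin.cons a Q : Fin (s+1) → K) i ≠ 0) ∧ eval (Fin.cons a Q : Fin (s+1) → K) f ≠ 0)
        ↔ ((∀ i, Q i ≠ 0) ∧ (a ≠ 0 ∧ eval Q h + eval Q g * a ≠ 0)) := by
      intro a Q
      rw [heval, Fin.forall_fin_succ]
      simp only [Fin.cons_zero, Fin.cons_succ]
      tauto
    have hmain : cntNZ K f = ∑ Q : Fin s → K,
        (Finset.univ.filter fun a : K =>
          ((∀ i, Q i ≠ 0) ∧ (a ≠ 0 ∧ eval Q h + eval Q g * a ≠ 0))).card := by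
      rw [cntNZ, Finset.card_filter]
      rw [← Equiv.sum_comp (consEquivF s K)
        (fun P => if (∀ i, P i ≠ 0) ∧ eval P f ≠ 0 then (1:ℕ) else 0)]
      rw [Fintype.sum_prod_type]
      refine Finset.sum_congr rfl fun Q _ => ?_
      rw [Finset.card_filter]
      refine Finset.sum_congr rfl fun a _ => ?_
      simp only [consEquivF_apply]
      exact if_congr (hsplit a Q) rfl rfl
    rw [hmain]
    by_cases hg : g = 0
    · -- case g = 0
      have hh0 : h ≠ 0 := by
        intro hh0
        apply hf0
        have hF0 : F = 0 := by rw [hFeq, hh0, hg]; simp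
        exact (map_eq_zero_iff (finSuccEquiv K s) (AlgEquiv.injective _)).mp (hF ▸ hF0)
      have hmemh : ∀ m ∈ h.support, m.cons 0 ∈ f.support := by
        intro m hm
        rw [mem_support_iff] at hm ⊢
        rwa [← finSuccEquiv_coeff_coeff, ← hF, ← hh']
      have hsfh : ∀ m ∈ h.support, ∀ i, m i ≤ 1 := by
        intro m hm i
        have := hsf _ (hmemh m hm) i.succ
        rwa [Finsupp.cons_succ] at this
      have hdh : h.totalDegree ≤ min d s := by
        apply Finset.sup_le
        intro m hm
        refine le_min ?_ ?_
        · have := le_totalDegree (hmemh m hm)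
          rw [cons_degree, zero_add] at this
          exact le_trans this hdeg
        · exact sf_degree_le m (hsfh m hm)
      have hbound : (q-1) * cntNZ K h ≤ ∑ Q : Fin s → K,
          (Finset.univ.filter fun a : K =>
            ((∀ i, Q i ≠ 0) ∧ (a ≠ 0 ∧ eval Q h + eval Q g * a ≠ 0))).card := by
        have : ∀ Q ∈ (Finset.univ.filter fun Q : Fin s → K =>
            (∀ i, Q i ≠ 0) ∧ eval Q h ≠ 0), (q-1) ≤
            (Finset.univ.filter fun a : K =>
              ((∀ i, Q i ≠ 0) ∧ (a ≠ 0 ∧ eval Q h + eval Q g * a ≠ 0))).card := by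
          intro Q hQ
          rw [Finset.mem_filter] at hQ
          obtain ⟨-, hQt, hQh⟩ := hQ
          have : (Finset.univ.filter fun a : K =>
              ((∀ i, Q i ≠ 0) ∧ (a ≠ 0 ∧ eval Q h + eval Q g * a ≠ 0)))
              = Finset.univ.filter (fun a : K => a ≠ 0) := by
            apply Finset.filter_congr
            intro a _
            rw [hg]
            simp [hQt, hQh]
          rw [this, Finset.filter_ne', Finset.card_erase_of_mem (Finset.mem_univ _),
            Finset.card_univ, hK]
        calc (q-1) * cntNZ K h
            = ∑ _Q ∈ (Finset.univ.filter fun Q : Fin s → K =>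
              (∀ i, Q i ≠ 0) ∧ eval Q h ≠ 0), (q-1) := by
              rw [Finset.sum_const, smul_eq_mul, mul_comm]; rfl
          _ ≤ ∑ Q ∈ (Finset.univ.filter fun Q : Fin s → K =>
              (∀ i, Q i ≠ 0) ∧ eval Q h ≠ 0),
              (Finset.univ.filter fun a : K =>
                ((∀ i, Q i ≠ 0) ∧ (a ≠ 0 ∧ eval Q h + eval Q g * a ≠ 0))).card :=
              Finset.sum_le_sum this
          _ ≤ _ := Finset.sum_le_sum_of_subset (Finset.subset_univ _)
      rcases le_or_gt d s with hdle | hdgt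
      · have hih := ih d hdle h hh0 hsfh (le_trans hdh (min_le_left _ _))
        calc (q-2)^d * (q-1)^(s+1-d)
            = (q-1) * ((q-2)^d * (q-1)^(s-d)) := by
              rw [Nat.succ_sub hdle, pow_succ]; ring
          _ ≤ (q-1) * cntNZ K h := Nat.mul_le_mul_left _ hih
          _ ≤ _ := hbound
      · have hd' : d = s + 1 := le_antisymm hds hdgt
        have hih := ih s le_rfl h hh0 hsfh (le_trans hdh (min_le_right _ _))
        calc (q-2)^d * (q-1)^(s+1-d)
            = (q-2) * (q-2)^s := by
              rw [hd']; simp [pow_succ]; ring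
          _ ≤ (q-1) * cntNZ K h := by
              have h1 : (q-2)^s ≤ cntNZ K h := by simpa using hih
              have h2 : q - 2 ≤ q - 1 := Nat.sub_le_sub_left (by norm_num) q
              exact Nat.mul_le_mul h2 h1
          _ ≤ _ := hbound
    · -- case g ≠ 0
      obtain ⟨m₀, hm₀⟩ := (MvPolynomial.ne_zero_iff.mp hg)
      have hmemg : ∀ m, coeff m g ≠ 0 → m.cons 1 ∈ f.support := by
        intro m hm
        rw [mem_support_iff]
        rwa [← finSuccEquiv_coeff_coeff, ← hF, ← hg']
      have hd1 : 1 ≤ d := by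
        have := le_totalDegree (hmemg m₀ hm₀)
        rw [cons_degree] at this
        exact le_trans (Nat.le_add_right 1 _) (le_trans this hdeg)
      have hsfg : ∀ m ∈ g.support, ∀ i, m i ≤ 1 := by
        intro m hm i
        have := hsf _ (hmemg m (mem_support_iff.mp hm)) i.succ
        rwa [Finsupp.cons_succ] at this
      have hdg : g.totalDegree ≤ d - 1 := by
        apply Finset.sup_le
        intro m hm
        have h1 := le_totalDegree (hmemg m (mem_support_iff.mp hm))
        rw [cons_degree] at h1
        have h3 : (m.sum fun _ e => e) + 1 ≤ d := by
          rw [add_comm]; exact le_trans h1 hdeg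
        exact Nat.le_sub_of_add_le h3
      have hbound : (q-2) * cntNZ K g ≤ ∑ Q : Fin s → K,
          (Finset.univ.filter fun a : K =>
            ((∀ i, Q i ≠ 0) ∧ (a ≠ 0 ∧ eval Q h + eval Q g * a ≠ 0))).card := by
        have key : ∀ Q ∈ (Finset.univ.filter fun Q : Fin s → K =>
            (∀ i, Q i ≠ 0) ∧ eval Q g ≠ 0), (q-2) ≤
            (Finset.univ.filter fun a : K =>
              ((∀ i, Q i ≠ 0) ∧ (a ≠ 0 ∧ eval Q h + eval Q g * a ≠ 0))).card := by
          intro Q hQ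
          rw [Finset.mem_filter] at hQ
          obtain ⟨-, hQt, hQg⟩ := hQ
          set p : K → Prop := fun a =>
            ((∀ i, Q i ≠ 0) ∧ (a ≠ 0 ∧ eval Q h + eval Q g * a ≠ 0)) with hp
          have hsub : (Finset.univ.filter fun a => ¬ p a)
              ⊆ ({0, -eval Q h / eval Q g} : Finset K) := by
            intro a ha
            rw [Finset.mem_filter, hp] at ha
            obtain ⟨-, ha⟩ := ha
            by_cases ha0 : a = 0
            · simp [ha0]
            · have heq : eval Q h + eval Q g * a = 0 := by
                by_contra hne
                exact ha ⟨hQt, ha0, hne⟩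
              have haeq : a = -eval Q h / eval Q g := by
                rw [eq_div_iff hQg]
                linear_combination heq
              rw [Finset.mem_insert]
              right
              simp [haeq]
          have hcard2 : (Finset.univ.filter fun a => ¬ p a).card ≤ 2 := by
            refine le_trans (Finset.card_le_card hsub) ?_
            refine le_trans (Finset.card_insert_le _ _) ?_
            simp
          have hpart := Finset.card_filter_add_card_filter_not
            (s := (Finset.univ : Finset K)) (p := p)
          rw [Finset.card_univ, hK] at hpart
          refine Nat.sub_le_iff_le_add.mpr ?_
          calc q = (Finset.univ.filter p).card + (Finset.univ.filter fun a => ¬ p a).card :=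
                hpart.symm
            _ ≤ (Finset.univ.filter p).card + 2 := Nat.add_le_add_left hcard2 _
        calc (q-2) * cntNZ K g
            = ∑ _Q ∈ (Finset.univ.filter fun Q : Fin s → K =>
              (∀ i, Q i ≠ 0) ∧ eval Q g ≠ 0), (q-2) := by
              rw [Finset.sum_const, smul_eq_mul, mul_comm]; rfl
          _ ≤ ∑ Q ∈ (Finset.univ.filter fun Q : Fin s → K =>
              (∀ i, Q i ≠ 0) ∧ eval Q g ≠ 0),
              (Finset.univ.filter fun a : K =>
                ((∀ i, Q i ≠ 0) ∧ (a ≠ 0 ∧ eval Q h + eval Q g * a ≠ 0))).card :=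
              Finset.sum_le_sum key
          _ ≤ _ := Finset.sum_le_sum_of_subset (Finset.subset_univ _)
      obtain ⟨e, rfl⟩ : ∃ e, d = e + 1 := ⟨d - 1, (Nat.succ_pred_eq_of_pos hd1).symm⟩
      have hih := ih e (Nat.succ_le_succ_iff.mp hds) g hg hsfg (by simpa using hdg)
      calc (q-2)^(e+1) * (q-1)^(s+1-(e+1))
          = (q-2) * ((q-2)^e * (q-1)^(s-e)) := by
            rw [Nat.succ_sub_succ, pow_succ]; ring
        _ ≤ (q-2) * cntNZ K g := Nat.mul_le_mul_left _ hih
        _ ≤ _ := hbound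


lemma prod_X_eq_monomial {s : ℕ} (e : Finset (Fin s)) :
    (∏ j ∈ e, (X j : MvPolynomial (Fin s) K)) = monomial (∑ j ∈ e, Finsupp.single j 1) 1 := by
  induction e using Finset.induction with
  | empty => simp
  | insert _ _ hj ih =>
    rw [Finset.prod_insert hj, ih, Finset.sum_insert hj, X, monomial_mul, one_mul]

lemma edgeSupp_apply {s : ℕ} (e : Finset (Fin s)) (i : Fin s) :
    (∑ j ∈ e, Finsupp.single j 1) i = if i ∈ e then 1 else 0 := by
  rw [Finsupp.finset_sum_apply]
  simp only [Finsupp.single_apply]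
  rw [Finset.sum_ite_eq' e i (fun _ => 1)]

lemma edgeSupp_degree {s : ℕ} (e : Finset (Fin s)) :
    ((∑ j ∈ e, Finsupp.single j 1 : Fin s →₀ ℕ).sum fun _ n => n) = e.card := by
  rw [Finsupp.sum_fintype _ _ (fun _ => rfl)]
  rw [Finset.sum_congr rfl (fun i _ => edgeSupp_apply e i)]
  simp [Finset.sum_ite_mem]


lemma evalTorus_apply {s : ℕ} (f : MvPolynomial (Fin s) K) (P : Torus s K) :
    evalTorus s K f P = eval (P.1 : Fin s → K) f := rfl

lemma wt_evalTorus {s : ℕ} (f : MvPolynomial (Fin s) K) :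
    wt (evalTorus s K f) = cntNZ K f := by
  rw [wt]
  have h1 : {P : Torus s K | evalTorus s K f P ≠ 0}
      = {P : Torus s K | eval (P.1 : Fin s → K) f ≠ 0} := rfl
  rw [h1, Set.ncard_eq_toFinset_card', Set.toFinset_setOf, cntNZ]
  apply Finset.card_bij (fun (P : Torus s K) _ => P.1)
  · intro P hP
    rw [Finset.mem_filter] at hP ⊢
    exact ⟨Finset.mem_univ _, P.2, hP.2⟩
  · intro P₁ _ P₂ _ hP
    exact Subtype.ext hP
  · intro P hP
    rw [Finset.mem_filter] at hP
    exact ⟨⟨P, hP.2.1⟩, Finset.mem_filter.mpr ⟨Finset.mem_univ _, hP.2.2⟩, rfl⟩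

lemma span_mem_props {s d : ℕ} {E : Set (Finset (Fin s))} (hE : ∀ e ∈ E, e.card ≤ d)
    {f : MvPolynomial (Fin s) K}
    (hf : f ∈ Submodule.span K ((fun e : Finset (Fin s) => ∏ j ∈ e, X j) '' E)) :
    ∀ m ∈ f.support, (∀ i, m i ≤ 1) ∧ (m.sum fun _ n => n) ≤ d := by
  let M : Submodule K (MvPolynomial (Fin s) K) :=
    { carrier := {f | ∀ m ∈ f.support, (∀ i, m i ≤ 1) ∧ (m.sum fun _ n => n) ≤ d}
      add_mem' := by
        intro a b ha hb m hm
        rcases Finset.mem_union.mp (MvPolynomial.support_add hm) with h | h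
        · exact ha m h
        · exact hb m h
      zero_mem' := by simp
      smul_mem' := by
        intro c a ha m hm
        exact ha m (Finsupp.support_smul hm) }
  have hle : Submodule.span K ((fun e : Finset (Fin s) => ∏ j ∈ e, X j) '' E) ≤ M := by
    rw [Submodule.span_le]
    rintro _ ⟨e, he, rfl⟩
    intro m hm
    simp only [prod_X_eq_monomial] at hm
    rw [MvPolynomial.support_monomial, if_neg (one_ne_zero)] at hm
    rw [Finset.mem_singleton] at hm
    subst hm
    constructor
    · intro i
      rw [edgeSupp_apply]
      split <;> omega
    · rw [edgeSupp_degree]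
      exact hE e he
  exact hle hf


def idxF (s : ℕ) (hs : 0 < s) (n : ℕ) : Fin s := ⟨n % s, Nat.mod_lt _ hs⟩

lemma idxF_val (s : ℕ) (hs : 0 < s) {n : ℕ} (h : n < s) : (idxF s hs n : ℕ) = n :=
  Nat.mod_eq_of_lt h

lemma idxF_self (s : ℕ) (hs : 0 < s) (i : Fin s) : idxF s hs i.val = i :=
  Fin.ext (idxF_val s hs i.isLt)

noncomputable def extremalF (s d₁ d₂ : ℕ) (hs : 0 < s) (K : Type) [Field K] :
    MvPolynomial (Fin s) K :=
  ∏ j ∈ Finset.range d₁,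
    (X (idxF s hs j) - if j < d₂ then X (idxF s hs (d₁ + j)) else 1)




lemma eval_extremalF (s d₁ d₂ : ℕ) (hs : 0 < s) (P : Fin s → K) :
    eval P (extremalF s d₁ d₂ hs K)
      = ∏ j ∈ Finset.range d₁,
          (P (idxF s hs j) - if j < d₂ then P (idxF s hs (d₁ + j)) else 1) := by
  rw [extremalF, map_prod]
  refine Finset.prod_congr rfl fun j _ => ?_
  rw [map_sub, eval_X, apply_ite (eval P), eval_X, map_one]

lemma extremalF_mem (s d₁ d₂ : ℕ) (hd : d₂ ≤ d₁) (hsum : d₁ + d₂ ≤ s) (hs : 0 < s) :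
    extremalF s d₁ d₂ hs K ∈ Submodule.span K
      ((fun e : Finset (Fin s) => ∏ j ∈ e, (X j : MvPolynomial (Fin s) K)) ''
        {e : Finset (Fin s) | d₂ ≤ e.card ∧ e.card ≤ d₁}) := by
  have hrw : extremalF s d₁ d₂ hs K = ∑ t ∈ (Finset.range d₁).powerset,
      (∏ j ∈ t, X (idxF s hs j)) *
        ∏ j ∈ Finset.range d₁ \ t,
          (-(if j < d₂ then X (idxF s hs (d₁ + j)) else (1 : MvPolynomial (Fin s) K))) := by
    rw [extremalF, Finset.prod_congr rfl (fun j _ => sub_eq_add_neg _ _)]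
    exact Finset.prod_add _ _ _
  rw [hrw]
  apply Submodule.sum_mem
  intro t ht
  rw [Finset.mem_powerset] at ht
  set u := Finset.range d₁ \ t with hu
  set v := u.filter (· < d₂) with hv
  have hprodneg : (∏ j ∈ u, (-(if j < d₂ then X (idxF s hs (d₁ + j)) else (1 : MvPolynomial (Fin s) K))))
      = (-1 : MvPolynomial (Fin s) K) ^ u.card *
        ∏ j ∈ v, X (idxF s hs (d₁ + j)) := by
    rw [Finset.prod_congr rfl (fun j _ => neg_eq_neg_one_mul _), Finset.prod_mul_distrib,
      Finset.prod_const, hv, Finset.prod_filter]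
  -- the edge
  set e : Finset (Fin s) := t.image (idxF s hs) ∪ v.image (fun j => idxF s hs (d₁ + j)) with he
  have hinj1 : Set.InjOn (idxF s hs) t := by
    intro a ha b hb hab
    have ha' : a < s := lt_of_lt_of_le (Finset.mem_range.mp (ht ha)) (by omega)
    have hb' : b < s := lt_of_lt_of_le (Finset.mem_range.mp (ht hb)) (by omega)
    have := congrArg Fin.val hab
    rwa [idxF_val s hs ha', idxF_val s hs hb'] at this
  have hvsub : ∀ j ∈ v, j < d₂ := by
    intro j hj
    rw [hv, Finset.mem_filter] at hj
    exact hj.2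
  have hinj2 : Set.InjOn (fun j => idxF s hs (d₁ + j)) v := by
    intro a ha b hb hab
    have ha' : d₁ + a < s := by have := hvsub a ha; omega
    have hb' : d₁ + b < s := by have := hvsub b hb; omega
    have := congrArg Fin.val hab
    rw [idxF_val s hs ha', idxF_val s hs hb'] at this
    omega
  have hdisj : Disjoint (t.image (idxF s hs)) (v.image (fun j => idxF s hs (d₁ + j))) := by
    rw [Finset.disjoint_left]
    rintro i hi1 hi2
    obtain ⟨a, ha, rfl⟩ := Finset.mem_image.mp hi1
    obtain ⟨b, hb, hab⟩ := Finset.mem_image.mp hi2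
    have ha' : a < d₁ := Finset.mem_range.mp (ht ha)
    have hb' : d₁ + b < s := by have := hvsub b hb; omega
    have := congrArg Fin.val hab
    rw [idxF_val s hs (by omega : a < s), idxF_val s hs hb'] at this
    omega
  have hprod : (∏ i ∈ e, (X i : MvPolynomial (Fin s) K))
      = (∏ j ∈ t, X (idxF s hs j)) * ∏ j ∈ v, X (idxF s hs (d₁ + j)) := by
    rw [he, Finset.prod_union hdisj, Finset.prod_image hinj1, Finset.prod_image hinj2]
  have hcarde : e.card = t.card + v.card := by
    rw [he, Finset.card_union_of_disjoint hdisj, Finset.card_image_of_injOn hinj1,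
      Finset.card_image_of_injOn hinj2]
  have htcard : t.card ≤ d₁ := by
    have := Finset.card_le_card ht
    rwa [Finset.card_range] at this
  have hucard : u.card = d₁ - t.card := by
    rw [hu, Finset.card_sdiff_of_subset ht, Finset.card_range]
  have hvcard : v.card ≤ u.card := Finset.card_le_card (Finset.filter_subset _ _)
  have hle : e.card ≤ d₁ := by omega
  have hsplitc : (t.filter (· < d₂)).card + v.card = d₂ := by
    rw [hv, ← Finset.card_union_of_disjoint
      (Finset.disjoint_filter_filter Finset.disjoint_sdiff)]
    rw [← Finset.filter_union, Finset.union_sdiff_of_subset ht]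
    have : (Finset.range d₁).filter (· < d₂) = Finset.range d₂ := by
      ext a
      simp only [Finset.mem_filter, Finset.mem_range]
      omega
    rw [this, Finset.card_range]
  have hge : d₂ ≤ e.card := by
    have := Finset.card_filter_le t (· < d₂)
    omega
  have hterm : (∏ j ∈ t, (X (idxF s hs j) : MvPolynomial (Fin s) K)) *
      ((-1 : MvPolynomial (Fin s) K) ^ u.card * ∏ j ∈ v, X (idxF s hs (d₁ + j)))
      = ((-1 : K) ^ u.card) • ∏ i ∈ e, (X i : MvPolynomial (Fin s) K) := by
    rw [MvPolynomial.smul_eq_C_mul, map_pow, map_neg, map_one, hprod]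
    ring
  rw [hprodneg, hterm]
  exact Submodule.smul_mem _ _ (Submodule.subset_span ⟨e, ⟨hge, hle⟩, rfl⟩)

variable [Fintype K]

lemma card_ne_zero (q : ℕ) (hK : Fintype.card K = q) :
    Fintype.card {x : K // x ≠ 0} = q - 1 := by
  rw [Fintype.card_subtype, Finset.filter_ne', Finset.card_erase_of_mem (Finset.mem_univ 0),
    Finset.card_univ, hK]

lemma card_ne_zero_one (q : ℕ) (hK : Fintype.card K = q) :
    Fintype.card {x : K // x ≠ 0 ∧ x ≠ 1} = q - 2 := by
  rw [Fintype.card_subtype]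
  have h : (Finset.univ.filter fun x : K => x ≠ 0 ∧ x ≠ 1) = Finset.univ \ ({0, 1} : Finset K) := by
    ext x
    simp only [Finset.mem_filter, Finset.mem_univ, true_and, Finset.mem_sdiff,
      Finset.mem_insert, Finset.mem_singleton, not_or]
  rw [h, Finset.card_sdiff_of_subset (Finset.subset_univ _), Finset.card_univ, hK,
    Finset.card_pair (zero_ne_one)]

lemma card_pair_subtype (q : ℕ) (hK : Fintype.card K = q) :
    Fintype.card {p : K × K // p.1 ≠ 0 ∧ p.2 ≠ 0 ∧ p.1 ≠ p.2} = (q - 1) * (q - 2) := by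
  rw [Fintype.card_subtype, Finset.card_filter, Fintype.sum_prod_type]
  have step1 : ∀ a : K, (∑ b : K, if a ≠ 0 ∧ b ≠ 0 ∧ a ≠ b then 1 else 0)
      = if a ≠ 0 then q - 2 else 0 := by
    intro a
    by_cases ha : a = 0
    · simp [ha]
    · rw [if_pos ha, ← Finset.card_filter]
      have h2 : (Finset.univ.filter fun b : K => a ≠ 0 ∧ b ≠ 0 ∧ a ≠ b)
          = Finset.univ \ ({0, a} : Finset K) := by
        ext b
        simp only [Finset.mem_filter, Finset.mem_univ, true_and, Finset.mem_sdiff,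
          Finset.mem_insert, Finset.mem_singleton, not_or]
        constructor
        · rintro ⟨-, hb0, hab⟩; exact ⟨hb0, fun h => hab h.symm⟩
        · rintro ⟨hb0, hba⟩; exact ⟨ha, hb0, fun h => hba h.symm⟩
      rw [h2, Finset.card_sdiff_of_subset (Finset.subset_univ _), Finset.card_univ, hK,
        Finset.card_pair (Ne.symm ha)]
  calc (∑ a : K, ∑ b : K, if (a, b).1 ≠ 0 ∧ (a, b).2 ≠ 0 ∧ (a, b).1 ≠ (a, b).2 then 1 else 0)
      = ∑ a : K, (if a ≠ 0 then q - 2 else 0) := Finset.sum_congr rfl fun a _ => step1 a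
    _ = ∑ a ∈ Finset.univ.filter (fun a : K => a ≠ 0), (q - 2) := (Finset.sum_filter _ _).symm
    _ = (q - 1) * (q - 2) := by
        rw [Finset.sum_const, smul_eq_mul, Finset.filter_ne', Finset.card_erase_of_mem
          (Finset.mem_univ 0), Finset.card_univ, hK]



lemma exists_good_point (q s d₁ d₂ : ℕ) (hq : 3 ≤ q) (hK : Fintype.card K = q)
    (hd : d₂ ≤ d₁) (hsum : d₁ + d₂ ≤ s) (hs : 0 < s) :
    ∃ P : Fin s → K, (∀ i, P i ≠ 0) ∧ eval P (extremalF s d₁ d₂ hs K) ≠ 0 := by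
  have hne : ((Finset.univ : Finset K) \ ({0, 1} : Finset K)).Nonempty := by
    apply Finset.card_pos.mp
    have h2 : ({0, 1} : Finset K).card ≤ 2 :=
      le_trans (Finset.card_insert_le _ _) (by simp)
    have h3 := Finset.card_sdiff_of_subset (Finset.subset_univ ({0, 1} : Finset K))
    rw [Finset.card_univ, hK] at h3
    omega
  obtain ⟨a, ha⟩ := hne
  rw [Finset.mem_sdiff] at ha
  have ha' := ha.2
  simp only [Finset.mem_insert, Finset.mem_singleton, not_or] at ha'
  obtain ⟨ha0, ha1⟩ := ha'
  refine ⟨fun i => if (i : ℕ) < d₂ then 1 else a, fun i => by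
    show (if (i : ℕ) < d₂ then (1:K) else a) ≠ 0
    split <;> simp [ha0], ?_⟩
  rw [eval_extremalF, Finset.prod_ne_zero_iff]
  intro j hj
  rw [Finset.mem_range] at hj
  have h1 : ((idxF s hs j : Fin s) : ℕ) = j := idxF_val _ _ (by omega)
  by_cases hjd : j < d₂
  · have h2 : ((idxF s hs (d₁ + j) : Fin s) : ℕ) = d₁ + j := idxF_val _ _ (by omega)
    rw [if_pos hjd]
    show (if ((idxF s hs j : Fin s) : ℕ) < d₂ then (1:K) else a)
      - (if ((idxF s hs (d₁ + j) : Fin s) : ℕ) < d₂ then (1:K) else a) ≠ 0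
    rw [h1, h2, if_pos hjd, if_neg (by omega)]
    exact sub_ne_zero_of_ne (Ne.symm ha1)
  · rw [if_neg hjd]
    show (if ((idxF s hs j : Fin s) : ℕ) < d₂ then (1:K) else a) - 1 ≠ 0
    rw [h1, if_neg hjd]
    exact sub_ne_zero_of_ne ha1

lemma cnt_upper (q s d₁ d₂ : ℕ) (hK : Fintype.card K = q)
    (hd : d₂ ≤ d₁) (hsum : d₁ + d₂ ≤ s) (hs : 0 < s) :
    cntNZ K (extremalF s d₁ d₂ hs K) ≤ (q - 2) ^ d₁ * (q - 1) ^ (s - d₁) := by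
  have hfac : ∀ (P : Fin s → K), eval P (extremalF s d₁ d₂ hs K) ≠ 0 → ∀ j, j < d₁ →
      P (idxF s hs j) - (if j < d₂ then P (idxF s hs (d₁ + j)) else 1) ≠ 0 := by
    intro P hP j hj
    rw [eval_extremalF, Finset.prod_ne_zero_iff] at hP
    exact hP j (Finset.mem_range.mpr hj)
  set pred : (Fin s → K) → Prop :=
    fun P => (∀ i, P i ≠ 0) ∧ eval P (extremalF s d₁ d₂ hs K) ≠ 0 with hpred
  have hcnt : cntNZ K (extremalF s d₁ d₂ hs K) = Fintype.card {P : Fin s → K // pred P} :=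
    (Fintype.card_subtype _).symm
  have hψ : ∃ ψ : {P : Fin s → K // pred P} → ((Fin d₂ → {p : K × K // p.1 ≠ 0 ∧ p.2 ≠ 0 ∧ p.1 ≠ p.2}) ×
    (Fin (d₁ - d₂) → {x : K // x ≠ 0 ∧ x ≠ 1}) ×
    (Fin (s - (d₁ + d₂)) → {x : K // x ≠ 0})), Function.Injective ψ := by
    refine ⟨fun P => ⟨fun j => ⟨(P.1 (idxF s hs j.val), P.1 (idxF s hs (d₁ + j.val))), ?_, ?_, ?_⟩,
      fun j => ⟨P.1 (idxF s hs (d₂ + j.val)), P.2.1 _, ?_⟩,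
      fun j => ⟨P.1 (idxF s hs (d₁ + d₂ + j.val)), P.2.1 _⟩⟩, ?_⟩
    · exact P.2.1 _
    · exact P.2.1 _
    · have := hfac P.1 P.2.2 j.val (by omega)
      rw [if_pos j.isLt] at this
      exact sub_ne_zero.mp this
    · have := hfac P.1 P.2.2 (d₂ + j.val) (by have := j.isLt; omega)
      rw [if_neg (by omega)] at this
      exact sub_ne_zero.mp this
    · intro P P' h
      have h1 := congrArg Prod.fst h
      have h23 := congrArg Prod.snd h
      have h2 := congrArg Prod.fst h23
      have h3 := congrArg Prod.snd h23
      simp only at h1 h2 h3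
      apply Subtype.ext
      funext i
      have his : (i : ℕ) < s := i.isLt
      rcases Nat.lt_or_ge (i : ℕ) d₂ with hc1 | hc1
      · have := congrArg (fun z => (Subtype.val z).1) (congrFun h1 ⟨(i : ℕ), hc1⟩)
        simp only at this
        rwa [idxF_self s hs i] at this
      · rcases Nat.lt_or_ge (i : ℕ) d₁ with hc2 | hc2
        · have := congrArg Subtype.val (congrFun h2 ⟨(i : ℕ) - d₂, by omega⟩)
          simp only at this
          rw [show d₂ + ((i : ℕ) - d₂) = (i : ℕ) from by omega, idxF_self s hs i] at this
          exact this
        · rcases Nat.lt_or_ge (i : ℕ) (d₁ + d₂) with hc3 | hc3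
          · have := congrArg (fun z => (Subtype.val z).2) (congrFun h1 ⟨(i : ℕ) - d₁, by omega⟩)
            simp only at this
            rw [show d₁ + ((i : ℕ) - d₁) = (i : ℕ) from by omega, idxF_self s hs i] at this
            exact this
          · have := congrArg Subtype.val (congrFun h3 ⟨(i : ℕ) - (d₁ + d₂), by omega⟩)
            simp only at this
            rw [show d₁ + d₂ + ((i : ℕ) - (d₁ + d₂)) = (i : ℕ) from by omega,
              idxF_self s hs i] at this
            exact this
  obtain ⟨ψ, hinj⟩ := hψ
  have hcardT : Fintype.card ((Fin d₂ → {p : K × K // p.1 ≠ 0 ∧ p.2 ≠ 0 ∧ p.1 ≠ p.2}) ×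
    (Fin (d₁ - d₂) → {x : K // x ≠ 0 ∧ x ≠ 1}) ×
    (Fin (s - (d₁ + d₂)) → {x : K // x ≠ 0})) = ((q - 1) * (q - 2)) ^ d₂ * ((q - 2) ^ (d₁ - d₂) *
      (q - 1) ^ (s - (d₁ + d₂))) := by
    rw [Fintype.card_prod, Fintype.card_prod, Fintype.card_fun, Fintype.card_fun,
      Fintype.card_fun, card_pair_subtype q hK, card_ne_zero_one q hK, card_ne_zero q hK,
      Fintype.card_fin, Fintype.card_fin, Fintype.card_fin]
  calc cntNZ K (extremalF s d₁ d₂ hs K) = Fintype.card {P : Fin s → K // pred P} := hcnt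
    _ ≤ Fintype.card ((Fin d₂ → {p : K × K // p.1 ≠ 0 ∧ p.2 ≠ 0 ∧ p.1 ≠ p.2}) ×
    (Fin (d₁ - d₂) → {x : K // x ≠ 0 ∧ x ≠ 1}) ×
    (Fin (s - (d₁ + d₂)) → {x : K // x ≠ 0})) := Fintype.card_le_of_injective ψ hinj
    _ = (q - 2) ^ d₁ * (q - 1) ^ (s - d₁) := by
        rw [hcardT, mul_pow]
        rw [show ((q-1)^d₂ * (q-2)^d₂) * ((q-2)^(d₁-d₂) * (q-1)^(s-(d₁+d₂)))
          = ((q-2)^d₂ * (q-2)^(d₁-d₂)) * ((q-1)^d₂ * (q-1)^(s-(d₁+d₂))) from by ring]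
        rw [← pow_add, ← pow_add]
        rw [show d₂ + (d₁ - d₂) = d₁ from by omega, show d₂ + (s - (d₁ + d₂)) = s - d₁ from by omega]


end Helpers

/-- for `q ≥ 3` and `1 ≤ d₂ ≤ d₁` with `d₁ + d₂ ≤ s`, the edge code of the
hypergraph on `{1,…,s}` whose edges are all subsets `e` with `d₂ ≤ |e| ≤ d₁` has minimum
distance `(q-2)^{d₁} (q-1)^{s-d₁}`. -/
theorem minDist_edgeCode_all_edges_between_degrees_low
    (q s d₁ d₂ : ℕ) (hq : 3 ≤ q) (hd₂ : 1 ≤ d₂) (hd : d₂ ≤ d₁) (hsum : d₁ + d₂ ≤ s)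
    (K : Type) [Field K] [Fintype K] (hK : Fintype.card K = q) :
    minDist (edgeCode s K
        {e : Finset (Fin s) | d₂ ≤ e.card ∧ e.card ≤ d₁})
      = (q - 2) ^ d₁ * (q - 1) ^ (s - d₁) := by
  classical
  have hs : 0 < s := by omega
  obtain ⟨P₀, hP₀t, hP₀⟩ := exists_good_point q s d₁ d₂ hq hK hd hsum hs
  have hFmem := extremalF_mem (K := K) s d₁ d₂ hd hsum hs
  have hcmem : evalTorus s K (extremalF s d₁ d₂ hs K) ∈
      edgeCode s K {e : Finset (Fin s) | d₂ ≤ e.card ∧ e.card ≤ d₁} :=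
    Submodule.mem_map_of_mem hFmem
  have hc0 : evalTorus s K (extremalF s d₁ d₂ hs K) ≠ 0 := by
    intro h0
    apply hP₀
    have h1 := congrFun h0 ⟨P₀, hP₀t⟩
    rwa [evalTorus_apply] at h1
  have hwtc : wt (evalTorus s K (extremalF s d₁ d₂ hs K)) ≤ (q-2)^d₁ * (q-1)^(s-d₁) := by
    rw [wt_evalTorus]
    exact cnt_upper q s d₁ d₂ hK hd hsum hs
  have hlow : ∀ w ∈ {w : ℕ | ∃ c ∈ edgeCode s K
      {e : Finset (Fin s) | d₂ ≤ e.card ∧ e.card ≤ d₁}, c ≠ 0 ∧ wt c = w},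
      (q-2)^d₁ * (q-1)^(s-d₁) ≤ w := by
    rintro w ⟨c', hc'mem, hc'0, rfl⟩
    rw [edgeCode, Submodule.mem_map] at hc'mem
    obtain ⟨f, hfspan, rfl⟩ := hc'mem
    have hf0 : f ≠ 0 := by rintro rfl; exact hc'0 (map_zero _)
    have hprops := span_mem_props (fun e he => he.2) hfspan
    rw [wt_evalTorus]
    exact lower_core q hq hK s d₁ (by omega) f hf0 (fun m hm => (hprops m hm).1)
      (Finset.sup_le fun m hm => (hprops m hm).2)
  rw [minDist]
  apply le_antisymm
  · exact le_trans (Nat.sInf_le ⟨_, hcmem, hc0, rfl⟩) hwtc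
  · exact le_csInf ⟨_, _, hcmem, hc0, rfl⟩ hlow
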